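/- arXiv:1501.05806 — 6 statements merged into one kernel-verified Lean document; each statement's English description precedes it below -/
import Mathlib

section
/- Let F be a field and let A be a unital F-algebra of F-vector-space dimension greater than 1 whose only two-sided ideals are the zero ideal and A itself (i.e., A is simple). If a subset S of A generates A as a unital F-algebra (the unital subalgebra generated by S is all of A), then the non-unital F-subalgebra generated by S is also all of A. -/
/-- If `A` is a simple unital `F`-algebra of dimension greater than `1` and `S` generates
`A` as a unital `F`-algebra, then `S` generates `A` as a non-unital `F`-algebra. -/
theorem stmt_0 (F : Type*) [Field F] (A : Type*) [Ring A] [Algebra F A]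
    (hdim : 1 < Module.rank F A)
    (hsimple : ∀ I : TwoSidedIdeal A, I = ⊥ ∨ I = ⊤)
    (S : Set A) (hS : Algebra.adjoin F S = ⊤) :
    NonUnitalAlgebra.adjoin F S = ⊤ := by
  set N := NonUnitalAlgebra.adjoin F S with hN
  -- every element of A is c•1 + n with n ∈ N
  have hspan : Submodule.span F {(1:A)} ⊔ N.toSubmodule = ⊤ := by
    have key : Subalgebra.toSubmodule (Algebra.adjoin F (N : Set A)) =
        Submodule.span F {(1:A)} ⊔ N.toSubmodule := by
      rw [Algebra.adjoin_eq_span, Submonoid.closure_eq_one_union, Submodule.span_union,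
        ← NonUnitalAlgebra.adjoin_eq_span, NonUnitalAlgebra.adjoin_eq]
    rw [← key, Algebra.adjoin_nonUnitalSubalgebra, hS]
    rfl
  have hdecomp : ∀ a : A, ∃ c : F, ∃ n ∈ N, a = c • (1:A) + n := by
    intro a
    have : a ∈ Submodule.span F {(1:A)} ⊔ N.toSubmodule := hspan ▸ Submodule.mem_top
    obtain ⟨x, hx, y, hy, hxy⟩ := Submodule.mem_sup.mp this
    obtain ⟨c, hc⟩ := Submodule.mem_span_singleton.mp hx
    exact ⟨c, y, hy, by rw [← hxy, ← hc]⟩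
  -- N is a two-sided ideal
  have mul_left : ∀ {x y : A}, y ∈ N → x * y ∈ N := by
    intro x y hy
    obtain ⟨c, n, hn, rfl⟩ := hdecomp x
    rw [add_mul, smul_mul_assoc, one_mul]
    exact add_mem (SMulMemClass.smul_mem c hy) (mul_mem hn hy)
  have mul_right : ∀ {x y : A}, x ∈ N → x * y ∈ N := by
    intro x y hx
    obtain ⟨c, n, hn, rfl⟩ := hdecomp y
    rw [mul_add, mul_smul_comm, mul_one]
    exact add_mem (SMulMemClass.smul_mem c hx) (mul_mem hx hn)
  let I : TwoSidedIdeal A := TwoSidedIdeal.mk' (N : Set A) (zero_mem N)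
    (fun hx hy => add_mem hx hy) (fun hx => neg_mem hx) mul_left mul_right
  have hmemI : ∀ x : A, x ∈ I ↔ x ∈ N := TwoSidedIdeal.mem_mk' _ _ _ _ _ _
  rcases hsimple I with hbot | htop
  · -- then N = 0, so A = span F {1}, rank ≤ 1, contradiction
    exfalso
    have hN0 : ∀ x ∈ N, x = (0:A) := by
      intro x hx
      have := (hmemI x).mpr hx
      rw [hbot] at this
      exact (TwoSidedIdeal.mem_bot _).mp this
    have : Submodule.span F {(1:A)} = ⊤ := by
      rw [← hspan]
      refine le_antisymm le_sup_left (sup_le le_rfl ?_)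
      intro x hx
      rw [hN0 x hx]
      exact zero_mem _
    have hrank : Module.rank F A ≤ 1 := by
      have h1 := rank_span_le (R := F) (M := A) {(1:A)}
      rw [this, rank_top] at h1
      simpa using h1
    exact absurd hrank (not_le.mpr hdim)
  · ext x
    simp only [NonUnitalAlgebra.mem_top, iff_true]
    have : x ∈ I := htop ▸ TwoSidedIdeal.mem_top _  -- membership in ⊤
    exact (hmemI x).mp this
end

section
/- Let n ≥ 1 and let S be a subset of M_n(ℂ) whose generated unital subalgebra is all of M_n(ℂ). If l(S) ≥ n and the ℂ-linear span of S contains an invertible matrix, then l(S) = l_0(S). -/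
/-- `L_k(S)`: the ℂ-linear span of all words in `S` of length at most `k`
(including the empty word, the identity matrix). -/
noncomputable def wordSpan (n k : ℕ) (S : Set (Matrix (Fin n) (Fin n) ℂ)) :
    Submodule ℂ (Matrix (Fin n) (Fin n) ℂ) :=
  Submodule.span ℂ {M | ∃ w : List (Matrix (Fin n) (Fin n) ℂ),
    w.length ≤ k ∧ (∀ x ∈ w, x ∈ S) ∧ M = w.prod}

/-- `L_k^0(S)`: the ℂ-linear span of all words in `S` of length between `1` and `k`. -/
noncomputable def wordSpan0 (n k : ℕ) (S : Set (Matrix (Fin n) (Fin n) ℂ)) :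
    Submodule ℂ (Matrix (Fin n) (Fin n) ℂ) :=
  Submodule.span ℂ {M | ∃ w : List (Matrix (Fin n) (Fin n) ℂ),
    1 ≤ w.length ∧ w.length ≤ k ∧ (∀ x ∈ w, x ∈ S) ∧ M = w.prod}

lemma wordSpan_mono (n : ℕ) (S : Set (Matrix (Fin n) (Fin n) ℂ)) {k k' : ℕ} (h : k ≤ k') :
    wordSpan n k S ≤ wordSpan n k' S :=
  Submodule.span_mono (fun M ⟨w, hw, hws, hM⟩ => ⟨w, hw.trans h, hws, hM⟩)

lemma wordSpan0_mono (n : ℕ) (S : Set (Matrix (Fin n) (Fin n) ℂ)) {k k' : ℕ} (h : k ≤ k') :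
    wordSpan0 n k S ≤ wordSpan0 n k' S :=
  Submodule.span_mono (fun M ⟨w, h1, hw, hws, hM⟩ => ⟨w, h1, hw.trans h, hws, hM⟩)

lemma wordSpan0_le_wordSpan (n k : ℕ) (S : Set (Matrix (Fin n) (Fin n) ℂ)) :
    wordSpan0 n k S ≤ wordSpan n k S :=
  Submodule.span_mono (fun M ⟨w, _, hw, hws, hM⟩ => ⟨w, hw, hws, hM⟩)

/-- Existence of some `k` with `wordSpan n k S = ⊤`, from generation. -/
lemma exists_wordSpan_top (n : ℕ) (S : Set (Matrix (Fin n) (Fin n) ℂ))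
    (hgen : Algebra.adjoin ℂ S = ⊤) : ∃ k, wordSpan n k S = ⊤ := by
  -- every element lies in some wordSpan
  have hmem : ∀ x : Matrix (Fin n) (Fin n) ℂ, ∃ k, x ∈ wordSpan n k S := by
    intro x
    have hx : x ∈ Submodule.span ℂ ((Submonoid.closure S : Submonoid _) : Set _) := by
      have : x ∈ Subalgebra.toSubmodule (Algebra.adjoin ℂ S) := by
        rw [hgen]; trivial
      rwa [Algebra.adjoin_eq_span] at this
    induction hx using Submodule.span_induction with
    | mem y hy =>
        obtain ⟨w, hw, hwp⟩ := Submonoid.exists_list_of_mem_closure hy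
        exact ⟨w.length, Submodule.subset_span ⟨w, le_rfl, hw, hwp.symm⟩⟩
    | zero => exact ⟨0, Submodule.zero_mem _⟩
    | add a b _ _ ha hb =>
        obtain ⟨k1, h1⟩ := ha
        obtain ⟨k2, h2⟩ := hb
        exact ⟨max k1 k2, Submodule.add_mem _
          (wordSpan_mono n S (le_max_left k1 k2) h1)
          (wordSpan_mono n S (le_max_right k1 k2) h2)⟩
    | smul c a _ ha =>
        obtain ⟨k1, h1⟩ := ha
        exact ⟨k1, Submodule.smul_mem _ c h1⟩
  -- stabilization by Noetherianity
  obtain ⟨N, hN⟩ := monotone_stabilizes_iff_noetherian.mpr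
    (inferInstance : IsNoetherian ℂ (Matrix (Fin n) (Fin n) ℂ))
    ⟨fun k => wordSpan n k S, fun _ _ h => wordSpan_mono n S h⟩
  refine ⟨N, eq_top_iff.mpr fun x _ => ?_⟩
  obtain ⟨k, hk⟩ := hmem x
  have := hN (max N k) (le_max_left N k)
  change wordSpan n N S = wordSpan n (max N k) S at this
  rw [this]
  exact wordSpan_mono n S (le_max_right N k) hk

/-- The identity belongs to `wordSpan0 n n S` when the span of `S` contains a unit. -/
lemma one_mem_wordSpan0 (n : ℕ) (hn : 1 ≤ n) (S : Set (Matrix (Fin n) (Fin n) ℂ))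
    (A : Matrix (Fin n) (Fin n) ℂ) (hA : A ∈ Submodule.span ℂ S) (hU : IsUnit A) :
    (1 : Matrix (Fin n) (Fin n) ℂ) ∈ wordSpan0 n n S := by
  have hpow : ∀ i, 1 ≤ i → i ≤ n → A ^ i ∈ wordSpan0 n n S := by
    intro i h1 h2
    have hmem : A ^ i ∈ (Submodule.span ℂ S) ^ i := Submodule.pow_mem_pow _ hA i
    rw [Submodule.span_pow] at hmem
    refine Submodule.span_le.mpr ?_ hmem
    intro x hx
    obtain ⟨f, hfx⟩ := Set.mem_pow.mp hx
    refine Submodule.subset_span ⟨List.ofFn fun j => (f j : Matrix (Fin n) (Fin n) ℂ), ?_, ?_, ?_, ?_⟩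
    · simpa using h1
    · simpa using h2
    · intro y hy
      simp only [List.mem_ofFn] at hy
      obtain ⟨j, rfl⟩ := hy
      exact (f j).2
    · exact hfx.symm
  -- Cayley–Hamilton
  have hdet : (A.charpoly.coeff 0) ≠ 0 := by
    have hdu : IsUnit A.det := (Matrix.isUnit_iff_isUnit_det A).mp hU
    intro h0
    rw [Matrix.det_eq_sign_charpoly_coeff, h0, mul_zero] at hdu
    exact hdu.ne_zero rfl
  have hCH := Matrix.aeval_self_charpoly A
  rw [Polynomial.aeval_eq_sum_range] at hCH
  rw [Matrix.charpoly_natDegree_eq_dim, Fintype.card_fin] at hCH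
  rw [Finset.sum_range_succ'] at hCH
  -- hCH : ∑ i in range n, coeff (i+1) • A^(i+1) + coeff 0 • A^0 = 0
  have key : A.charpoly.coeff 0 • (1 : Matrix (Fin n) (Fin n) ℂ)
      = -∑ i ∈ Finset.range n, A.charpoly.coeff (i + 1) • A ^ (i + 1) := by
    rw [pow_zero] at hCH
    linear_combination (norm := module) hCH
  have hsum : (∑ i ∈ Finset.range n, A.charpoly.coeff (i + 1) • A ^ (i + 1))
      ∈ wordSpan0 n n S := by
    refine Submodule.sum_mem _ fun i hi => Submodule.smul_mem _ _ ?_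
    exact hpow (i + 1) (Nat.le_add_left 1 i) (Finset.mem_range.mp hi)
  have h1 : A.charpoly.coeff 0 • (1 : Matrix (Fin n) (Fin n) ℂ) ∈ wordSpan0 n n S := by
    rw [key]; exact Submodule.neg_mem _ hsum
  have := Submodule.smul_mem _ (A.charpoly.coeff 0)⁻¹ h1
  rwa [smul_smul, inv_mul_cancel₀ hdet, one_smul] at this

/-- If `S` generates `M_n(ℂ)`, `l(S) ≥ n` and the linear span of `S` contains an
invertible matrix, then `l(S) = l_0(S)`. -/
theorem stmt_1 (n : ℕ) (hn : 1 ≤ n) (S : Set (Matrix (Fin n) (Fin n) ℂ))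
    (hgen : Algebra.adjoin ℂ S = ⊤)
    (hlen : n ≤ sInf {k | wordSpan n k S = ⊤})
    (hinv : ∃ A ∈ Submodule.span ℂ S, IsUnit A) :
    sInf {k | wordSpan n k S = ⊤} = sInf {k | wordSpan0 n k S = ⊤} := by
  obtain ⟨A, hA, hU⟩ := hinv
  have h1mem : (1 : Matrix (Fin n) (Fin n) ℂ) ∈ wordSpan0 n n S :=
    one_mem_wordSpan0 n hn S A hA hU
  set l := sInf {k | wordSpan n k S = ⊤} with hl
  have hne : {k | wordSpan n k S = ⊤}.Nonempty := exists_wordSpan_top n S hgen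
  have hlmem : wordSpan n l S = ⊤ := Nat.sInf_mem hne
  -- since n ≤ l, 1 ∈ wordSpan0 n l S, hence wordSpan n l S ≤ wordSpan0 n l S
  have h1l : (1 : Matrix (Fin n) (Fin n) ℂ) ∈ wordSpan0 n l S :=
    wordSpan0_mono n S hlen h1mem
  have hle : wordSpan n l S ≤ wordSpan0 n l S := by
    refine Submodule.span_le.mpr ?_
    rintro M ⟨w, hw, hws, rfl⟩
    rcases Nat.eq_zero_or_pos w.length with h0 | hpos
    · rw [List.length_eq_zero_iff.mp h0, List.prod_nil]
      exact h1l
    · exact Submodule.subset_span ⟨w, hpos, hw, hws, rfl⟩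
  have hl0top : wordSpan0 n l S = ⊤ := top_unique (hlmem ▸ hle)
  -- l ∈ both sets
  have hBsubA : {k | wordSpan0 n k S = ⊤} ⊆ {k | wordSpan n k S = ⊤} := by
    intro k hk
    exact top_unique (hk ▸ wordSpan0_le_wordSpan n k S)
  have hBne : {k | wordSpan0 n k S = ⊤}.Nonempty := ⟨l, hl0top⟩
  apply le_antisymm
  · exact Nat.sInf_le (hBsubA (Nat.sInf_mem hBne))
  · exact Nat.sInf_le hl0top
end

section
/- Let n ≥ 3, let J_n ∈ M_n(ℂ) be the nilpotent Jordan block ((J_n)_{a,b} = 1 if b = a + 1 and 0 otherwise), and let B_n = E_{n−1,1} − E_{n,2} ∈ M_n(ℂ). Then the unital subalgebra of M_n(ℂ) generated by {J_n, B_n} is all of M_n(ℂ). -/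
/-- The `n × n` nilpotent Jordan block over `ℂ`. -/
def jordan (n : ℕ) : Matrix (Fin n) (Fin n) ℂ :=
  Matrix.of fun a b => if (a : ℕ) + 1 = (b : ℕ) then 1 else 0

open Matrix


lemma jordan_mul_std (n i j : ℕ) (hi : i + 1 < n) (hj : j < n) :
    jordan n * single ⟨i+1, hi⟩ ⟨j, hj⟩ (1:ℂ) =
      single ⟨i, by omega⟩ ⟨j, hj⟩ 1 := by
  ext a b
  simp only [mul_apply, jordan, single, of_apply, Fin.ext_iff, boole_mul, ite_and, mul_ite, mul_one, mul_zero]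
  rcases Nat.lt_or_ge (a:ℕ) (n-1) with h | h
  · rw [Finset.sum_eq_single (⟨(a:ℕ)+1, by omega⟩ : Fin n)]
    · simp only [Fin.ext_iff]
      split_ifs <;> simp_all <;> omega
    · intro k _ hk; simp only [ne_eq, Fin.ext_iff] at hk ⊢
      split_ifs <;> simp_all <;> omega
    · simp
  · rw [Finset.sum_eq_zero (fun k _ => by
      split_ifs <;> simp_all <;> omega)]
    split_ifs <;> simp_all <;> omega

lemma jordan_mul_std0 (n j : ℕ) (hn : 0 < n) (hj : j < n) :
    jordan n * single ⟨0, hn⟩ ⟨j, hj⟩ (1:ℂ) = 0 := by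
  ext a b
  simp only [mul_apply, jordan, single, of_apply, Fin.ext_iff, ite_and, mul_ite, mul_one, mul_zero, Matrix.zero_apply]
  refine Finset.sum_eq_zero fun k _ => ?_
  split_ifs <;> first | rfl | omega

lemma std_mul_jordan (n i j : ℕ) (hi : i < n) (hj : j + 1 < n) :
    single ⟨i, hi⟩ ⟨j, by omega⟩ (1:ℂ) * jordan n =
      single ⟨i, hi⟩ ⟨j+1, hj⟩ 1 := by
  ext a b
  simp only [mul_apply, jordan, single, of_apply, Fin.ext_iff, ite_and, ite_mul, one_mul, zero_mul]
  rw [Finset.sum_eq_single (⟨j, by omega⟩ : Fin n)]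
  · simp [Fin.ext_iff]
  · intro k _ hk; simp [Fin.ext_iff] at hk ⊢; omega
  · simp

lemma jordan_pow_mul_std (n k i i' j : ℕ) (hi : i < n) (hi' : i' < n) (hj : j < n)
    (h : i' + k = i) :
    (jordan n)^k * single ⟨i, hi⟩ ⟨j, hj⟩ (1:ℂ) =
      single ⟨i', hi'⟩ ⟨j, hj⟩ 1 := by
  induction k generalizing i' with
  | zero =>
    obtain rfl : i' = i := by omega
    simp
  | succ k ih =>
    rw [pow_succ', mul_assoc, ih (i'+1) (by omega) (by omega)]
    exact jordan_mul_std n i' j (by omega) hj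

lemma std_mul_jordan_pow (n k i j j' : ℕ) (hi : i < n) (hj : j < n) (hj' : j' < n)
    (h : j + k = j') :
    single ⟨i, hi⟩ ⟨j, hj⟩ (1:ℂ) * (jordan n)^k =
      single ⟨i, hi⟩ ⟨j', hj'⟩ 1 := by
  induction k generalizing j' with
  | zero =>
    obtain rfl : j' = j := by omega
    simp
  | succ k ih =>
    obtain rfl : j' = (j + k) + 1 := by omega
    rw [pow_succ, ← mul_assoc, ih (j+k) (by omega) rfl]
    exact std_mul_jordan n i (j+k) hi hj'

/-- For `n ≥ 3`, the matrices `J_n` and `B_n = E_{n-1,1} - E_{n,2}` generate `M_n(ℂ)`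
as a unital algebra. -/
theorem stmt_7 (n : ℕ) (hn : 3 ≤ n) :
    Algebra.adjoin ℂ
      ({jordan n,
        Matrix.single ⟨n - 2, by omega⟩ ⟨0, by omega⟩ (1 : ℂ) -
          Matrix.single ⟨n - 1, by omega⟩ ⟨1, by omega⟩ (1 : ℂ)} :
        Set (Matrix (Fin n) (Fin n) ℂ)) = ⊤ := by
  have hn2 : n - 2 < n := by omega
  have hn1 : n - 1 < n := by omega
  have h0 : 0 < n := by omega
  have h1 : 1 < n := by omega
  set B : Matrix (Fin n) (Fin n) ℂ :=
    single ⟨n - 2, hn2⟩ ⟨0, h0⟩ (1 : ℂ) -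
      single ⟨n - 1, hn1⟩ ⟨1, h1⟩ (1 : ℂ) with hBdef
  set A := Algebra.adjoin ℂ ({jordan n, B} : Set (Matrix (Fin n) (Fin n) ℂ)) with hAdef
  have hJ : jordan n ∈ A := Algebra.subset_adjoin (Set.mem_insert _ _)
  have hB : B ∈ A := Algebra.subset_adjoin (Set.mem_insert_of_mem _ rfl)
  -- E_{0,1} ∈ A
  have key01 : (jordan n)^(n-1) * B = -single ⟨0, h0⟩ ⟨1, h1⟩ (1:ℂ) := by
    rw [hBdef, mul_sub]
    have hz : (jordan n)^(n-1) * single ⟨n - 2, hn2⟩ ⟨0, h0⟩ (1:ℂ) = 0 := by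
      have : n - 1 = (n-2) + 1 := by omega
      rw [this, pow_succ', mul_assoc,
        jordan_pow_mul_std n (n-2) (n-2) 0 0 hn2 h0 h0 (by omega),
        jordan_mul_std0 n 0 h0 h0]
    rw [hz, jordan_pow_mul_std n (n-1) (n-1) 0 1 hn1 h0 h1 (by omega)]
    simp
  have hE01 : single ⟨0, h0⟩ ⟨1, h1⟩ (1:ℂ) ∈ A := by
    have : single ⟨0, h0⟩ ⟨1, h1⟩ (1:ℂ) = -((jordan n)^(n-1) * B) := by
      rw [key01, neg_neg]
    rw [this]
    exact neg_mem (mul_mem (pow_mem hJ _) hB)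
  -- E_{0,j} ∈ A for all j
  have hE0 : ∀ j (hj : j < n), single ⟨0, h0⟩ ⟨j, hj⟩ (1:ℂ) ∈ A := by
    intro j hj
    rcases Nat.eq_zero_or_pos j with rfl | hjpos
    · have : single ⟨0, h0⟩ ⟨0, hj⟩ (1:ℂ) =
        single ⟨0, h0⟩ ⟨n-2, hn2⟩ (1:ℂ) * B := by
        rw [hBdef, mul_sub, Matrix.single_mul_single_same,
          Matrix.single_mul_single_of_ne (h :=
            (show (⟨n-2,hn2⟩:Fin n) ≠ ⟨n-1,hn1⟩ by simp [Fin.ext_iff]; omega))]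
        simp
      rw [this]
      have hEn2' : single ⟨0, h0⟩ ⟨n-2, hn2⟩ (1:ℂ) ∈ A := by
        have := std_mul_jordan_pow n (n-3) 0 1 (n-2) h0 h1 hn2 (by omega)
        rw [← this]
        exact mul_mem hE01 (pow_mem hJ _)
      exact mul_mem hEn2' hB
    · have := std_mul_jordan_pow n (j-1) 0 1 j h0 h1 hj (by omega)
      rw [← this]
      exact mul_mem hE01 (pow_mem hJ _)
  -- E_{n-2,j} ∈ A
  have hEn2 : ∀ j (hj : j < n), single ⟨n-2, hn2⟩ ⟨j, hj⟩ (1:ℂ) ∈ A := by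
    intro j hj
    have : single ⟨n-2, hn2⟩ ⟨j, hj⟩ (1:ℂ) =
        B * single ⟨0, h0⟩ ⟨j, hj⟩ (1:ℂ) := by
      rw [hBdef, sub_mul, Matrix.single_mul_single_same,
        Matrix.single_mul_single_of_ne (h :=
          (show (⟨1,h1⟩:Fin n) ≠ ⟨0,h0⟩ by simp [Fin.ext_iff]))]
      simp
    rw [this]
    exact mul_mem hB (hE0 j hj)
  -- E_{i,j} ∈ A for i ≤ n-2
  have hEle : ∀ i j (hi : i < n) (hj : j < n), i ≤ n-2 →
      single ⟨i, hi⟩ ⟨j, hj⟩ (1:ℂ) ∈ A := by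
    intro i j hi hj hile
    have := jordan_pow_mul_std n (n-2-i) (n-2) i j hn2 hi hj (by omega)
    rw [← this]
    exact mul_mem (pow_mem hJ _) (hEn2 j hj)
  -- all E_{i,j} ∈ A
  have hAll : ∀ i j (hi : i < n) (hj : j < n),
      single ⟨i, hi⟩ ⟨j, hj⟩ (1:ℂ) ∈ A := by
    intro i j hi hj
    rcases Nat.lt_or_ge i (n-1) with hilt | hige
    · exact hEle i j hi hj (by omega)
    · obtain rfl : i = n - 1 := by omega
      have : single ⟨n-1, hi⟩ ⟨j, hj⟩ (1:ℂ) =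
          -(B * single ⟨1, h1⟩ ⟨j, hj⟩ (1:ℂ)) := by
        rw [hBdef, sub_mul, Matrix.single_mul_single_same,
          Matrix.single_mul_single_of_ne (h :=
            (show (⟨0,h0⟩:Fin n) ≠ ⟨1,h1⟩ by simp [Fin.ext_iff]))]
        simp
      rw [this]
      exact neg_mem (mul_mem hB (hEle 1 j h1 hj (by omega)))
  -- conclude
  rw [eq_top_iff]
  rintro M -
  rw [matrix_eq_sum_single M]
  refine Subalgebra.sum_mem _ fun i _ => Subalgebra.sum_mem _ fun j _ => ?_
  have : single i j (M i j) = (M i j) • single i j (1:ℂ) := by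
    rw [smul_single, smul_eq_mul, mul_one]
  rw [this]
  have h2 : single i j (1:ℂ) = single ⟨(i:ℕ), i.isLt⟩ ⟨(j:ℕ), j.isLt⟩ (1:ℂ) := by
    simp
  rw [h2]
  exact Subalgebra.smul_mem _ (hAll i j i.isLt j.isLt) _
end

section
/- Let n and i be positive integers with i < n, let J_n ∈ M_n(ℂ) be the nilpotent Jordan block, and let J_nᵀ be its transpose. Then the unital subalgebra of M_n(ℂ) generated by {J_n^i, (J_nᵀ)^{n−i}} is all of M_n(ℂ) if and only if gcd(i, n − i) = 1 (equivalently, gcd(n, i) = 1). -/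
open Matrix

namespace Stmt11Aux

open PEquiv

lemma mod_cancel {n x u v : ℕ} (hx : x < n) (h : (u + v) % n = 0) :
    ((x + u) % n + v) % n = x := by
  rw [Nat.mod_add_mod, add_assoc, Nat.add_mod x (u + v) n, h, add_zero,
    Nat.mod_eq_of_lt hx, Nat.mod_eq_of_lt hx]

lemma mul_split {n i m : ℕ} (hin : i ≤ n) : (m * i + m * (n - i)) % n = 0 := by
  have : m * i + m * (n - i) = n * m := by rw [← Nat.mul_add]; rw [Nat.mul_comm]; congr 1; omega
  simp [this, Nat.mul_mod_right]

/-- The partial shift `a ↦ a + m` (defined when `a + m < n`). -/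
def sh (n m : ℕ) : Fin n ≃. Fin n where
  toFun a := if h : (a : ℕ) + m < n then some ⟨(a : ℕ) + m, h⟩ else none
  invFun b := if h : m ≤ (b : ℕ) then some ⟨(b : ℕ) - m, by omega⟩ else none
  inv a b := by
    have ha := a.isLt; have hb := b.isLt
    simp only [← Option.mem_def]
    split_ifs with h1 h2 <;>
      simp only [Option.mem_def, Option.some_inj, Fin.ext_iff, Fin.val_mk] <;>
      first
        | (constructor <;> (intro h; omega))
        | (simp; omega)
        | simp

lemma mem_sh {n m : ℕ} {a b : Fin n} : b ∈ sh n m a ↔ (a : ℕ) + m = (b : ℕ) := by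
  have hb := b.isLt
  show b ∈ (if h : (a : ℕ) + m < n then some (⟨(a : ℕ) + m, h⟩ : Fin n) else none) ↔ _
  split_ifs with h
  · simp [Fin.ext_iff, eq_comm]
  · simp only [Option.not_mem_none, false_iff]; omega

/-- The full rotation `a ↦ a + m*i (mod n)`. -/
def rotm (n i : ℕ) (hin : i ≤ n) (m : ℕ) : Fin n ≃. Fin n where
  toFun a := some ⟨((a : ℕ) + m * i) % n, Nat.mod_lt _ a.pos⟩
  invFun b := some ⟨((b : ℕ) + m * (n - i)) % n, Nat.mod_lt _ b.pos⟩
  inv a b := by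
    have ha := a.isLt; have hb := b.isLt
    simp only [Option.mem_def, Option.some_inj, Fin.ext_iff, Fin.val_mk]
    constructor <;> intro h
    · rw [← h, mod_cancel hb (by rw [Nat.add_comm]; exact mul_split hin)]
    · rw [← h, mod_cancel ha (mul_split hin)]

lemma mem_rotm {n i : ℕ} (hin : i ≤ n) {m : ℕ} {a b : Fin n} :
    b ∈ rotm n i hin m a ↔ (b : ℕ) = ((a : ℕ) + m * i) % n := by
  show b ∈ some (⟨((a : ℕ) + m * i) % n, Nat.mod_lt _ a.pos⟩ : Fin n) ↔ _
  simp [Fin.ext_iff, eq_comm]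

/-- Diagonal partial identity on the set `{x | (x + m*i) % n < i}`. -/
def pr (n i m : ℕ) : Fin n ≃. Fin n where
  toFun a := if ((a : ℕ) + m * i) % n < i then some a else none
  invFun a := if ((a : ℕ) + m * i) % n < i then some a else none
  inv a b := by
    simp only [← Option.mem_def]; split_ifs <;> simp_all [eq_comm] <;> (rintro rfl; omega)

lemma mem_pr {n i m : ℕ} {a b : Fin n} :
    b ∈ pr n i m a ↔ b = a ∧ ((a : ℕ) + m * i) % n < i := by
  show b ∈ (if ((a : ℕ) + m * i) % n < i then some a else none) ↔ _
  split_ifs with h <;> simp [h, eq_comm]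

lemma jordan_pow (n m : ℕ) : jordan n ^ m = (sh n m).toMatrix := by
  induction m with
  | zero =>
    have h0 : sh n 0 = PEquiv.refl (Fin n) := by
      ext a b
      rw [← Option.mem_def, mem_sh]
      simp only [refl_apply, Option.mem_def, Option.some_inj]
      constructor
      · intro h; exact Fin.ext (by omega)
      · rintro rfl; omega
    rw [pow_zero, h0, toMatrix_refl]
  | succ m ih =>
    have hJ : jordan n = (sh n 1).toMatrix := by
      ext a b
      simp only [jordan, toMatrix_apply, Matrix.of_apply, mem_sh]
    have ht : (sh n m).trans (sh n 1) = sh n (m + 1) := by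
      ext a c
      simp only [← Option.mem_def, mem_trans, mem_sh]
      constructor
      · rintro ⟨b, hb1, hb2⟩; omega
      · intro h
        refine ⟨⟨(a : ℕ) + m, by omega⟩, rfl, by simp; omega⟩
    rw [pow_succ, ih, hJ, ← toMatrix_trans, ht]

lemma rotm_trans_rotm {n i : ℕ} (hin : i ≤ n) (p q : ℕ) :
    (rotm n i hin p).trans (rotm n i hin q) = rotm n i hin (p + q) := by
  ext a c
  simp only [← Option.mem_def, mem_trans, mem_rotm hin]
  constructor
  · rintro ⟨b, hb1, hb2⟩
    rw [hb2, hb1, Nat.mod_add_mod, add_assoc, ← Nat.add_mul]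
  · intro h
    refine ⟨⟨((a : ℕ) + p * i) % n, Nat.mod_lt _ a.pos⟩, rfl, ?_⟩
    simp only [Fin.val_mk, Nat.mod_add_mod]
    rw [h, add_assoc, ← Nat.add_mul]

lemma rotm_zero {n i : ℕ} (hin : i ≤ n) : rotm n i hin 0 = PEquiv.refl (Fin n) := by
  ext a b
  rw [← Option.mem_def, mem_rotm hin]
  simp [mem_rotm hin, Nat.mod_eq_of_lt b.isLt, Nat.mod_eq_of_lt a.isLt, eq_comm, Fin.ext_iff]

lemma pow_rotm {n i : ℕ} (hin : i ≤ n) (m : ℕ) :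
    ((rotm n i hin 1).toMatrix : Matrix (Fin n) (Fin n) ℂ) ^ m = (rotm n i hin m).toMatrix := by
  induction m with
  | zero => rw [pow_zero, rotm_zero hin, toMatrix_refl]
  | succ m ih => rw [pow_succ, ih, ← toMatrix_trans, rotm_trans_rotm]

lemma C_eq {n i : ℕ} (hin : i < n) :
    ((sh n i).toMatrix : Matrix (Fin n) (Fin n) ℂ) + ((sh n (n - i)).symm).toMatrix
      = (rotm n i (le_of_lt hin) 1).toMatrix := by
  ext a b
  have ha := a.isLt; have hb := b.isLt
  simp only [Matrix.add_apply, toMatrix_apply, mem_iff_mem, mem_sh,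
    mem_rotm (le_of_lt hin), one_mul]
  rcases lt_or_ge ((a : ℕ) + i) n with h | h
  · rw [Nat.mod_eq_of_lt h]
    split_ifs <;> norm_num <;> omega
  · rw [Nat.mod_eq_sub_mod h, Nat.mod_eq_of_lt (by omega)]
    split_ifs <;> norm_num <;> omega

lemma rot_pred_val {n i : ℕ} (hi : 0 < i) (hin : i < n) (a : Fin n) :
    ((a : ℕ) + (n - 1) * i) % n
      = if (a : ℕ) < i then (a : ℕ) + (n - i) else (a : ℕ) - i := by
  have ha := a.isLt
  have hni : (n - 1) * i + i = n * i := by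
    rw [← Nat.succ_mul]; congr 1; omega
  have hii : i ≤ n * i := Nat.le_mul_of_pos_left i (by omega)
  have hnn : n ≤ n * i := Nat.le_mul_of_pos_right n hi
  split_ifs with h
  · have h2 : n * (i - 1) + n = n * i := by rw [← Nat.mul_succ]; congr 1; omega
    have e : (a : ℕ) + (n - 1) * i = ((a : ℕ) + (n - i)) + n * (i - 1) := by omega
    rw [e, Nat.add_mul_mod_self_left, Nat.mod_eq_of_lt (by omega)]
  · have e : (a : ℕ) + (n - 1) * i = ((a : ℕ) - i) + n * i := by omega
    rw [e, Nat.add_mul_mod_self_left, Nat.mod_eq_of_lt (by omega)]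

lemma P0_eq {n i : ℕ} (hi : 0 < i) (hin : i < n) :
    (rotm n i hin.le (n - 1)).trans ((sh n (n - i)).symm) = pr n i 0 := by
  ext a c
  have ha := a.isLt; have hc := c.isLt
  have hv := rot_pred_val hi hin a
  simp only [← Option.mem_def, mem_trans, mem_iff_mem, mem_sh, mem_pr, mem_rotm hin.le, Nat.zero_mul, add_zero,
    Nat.mod_eq_of_lt ha]
  constructor
  · rintro ⟨b, hb, hcb⟩
    rcases lt_or_ge (a : ℕ) i with h | h
    · rw [if_pos h] at hv
      exact ⟨Fin.ext (by omega), by omega⟩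
    · rw [if_neg (by omega)] at hv
      exfalso
      have hblt := b.isLt
      omega
  · rintro ⟨h1, h⟩
    have hca : (c : ℕ) = (a : ℕ) := by rw [h1]
    rw [if_pos h] at hv
    refine ⟨⟨((a : ℕ) + (n - 1) * i) % n, Nat.mod_lt _ (by omega)⟩, rfl, ?_⟩
    simp only [Fin.val_mk]
    omega

lemma pr_succ {n i : ℕ} (hi : 0 < i) (hin : i < n) (m : ℕ) :
    (rotm n i hin.le 1).trans ((pr n i m).trans (rotm n i hin.le (n - 1))) = pr n i (m + 1) := by
  have hni : (n - 1) * i + i = n * i := by rw [← Nat.succ_mul]; congr 1; omega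
  have hii : i ≤ n * i := Nat.le_mul_of_pos_left i (by omega)
  ext a c
  have ha := a.isLt; have hc := c.isLt
  have f1 : (((a : ℕ) + i) % n + m * i) % n = ((a : ℕ) + (m + 1) * i) % n := by
    rw [Nat.mod_add_mod]; congr 1; ring_nf
  have f2 : (((a : ℕ) + i) % n + (n - 1) * i) % n = (a : ℕ) := by
    rw [Nat.mod_add_mod]
    have e : (a : ℕ) + i + (n - 1) * i = (a : ℕ) + n * i := by omega
    rw [e, Nat.add_mul_mod_self_left, Nat.mod_eq_of_lt ha]
  simp only [← Option.mem_def, mem_trans, mem_pr, mem_rotm hin.le, one_mul]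
  constructor
  · rintro ⟨b, hb, b', ⟨rfl, hb2⟩, hc'⟩
    rw [hb] at hb2 hc'
    rw [f1] at hb2
    rw [f2] at hc'
    exact ⟨Fin.ext hc', hb2⟩
  · rintro ⟨rfl, h⟩
    refine ⟨⟨((c : ℕ) + i) % n, Nat.mod_lt _ (by omega)⟩, rfl, ⟨((c : ℕ) + i) % n, Nat.mod_lt _ (by omega)⟩, ⟨rfl, ?_⟩, ?_⟩ <;>
      simp only [Fin.val_mk]
    · rw [f1]; exact h
    · rw [f2]

lemma pr_toMatrix {n i : ℕ} (m : ℕ) :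
    ((pr n i m).toMatrix : Matrix (Fin n) (Fin n) ℂ)
      = Matrix.diagonal (fun x : Fin n => if ((x : ℕ) + m * i) % n < i then 1 else 0) := by
  ext a b
  simp only [toMatrix_apply, mem_pr, Matrix.diagonal_apply]
  split_ifs <;> simp_all [eq_comm] <;> omega

lemma list_prod_diagonal {n : ℕ} (l : List ℕ) (g : ℕ → Fin n → ℂ) :
    ((l.map fun m => Matrix.diagonal (g m)).prod : Matrix (Fin n) (Fin n) ℂ)
      = Matrix.diagonal (fun x => ((l.map fun m => g m x)).prod) := by
  induction l with
  | nil => simp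
  | cons a l ih => simp [ih, Matrix.diagonal_mul_diagonal]

lemma single_toMatrix {n : ℕ} (a b : Fin n) :
    ((PEquiv.single a b).toMatrix : Matrix (Fin n) (Fin n) ℂ)
      = Matrix.single a b 1 := by
  ext x y
  simp only [toMatrix_apply, mem_single_iff, Matrix.single, Matrix.of_apply]
  split_ifs <;> simp_all [eq_comm]

lemma diag_single {n : ℕ} (x : Fin n) :
    Matrix.diagonal (fun y : Fin n => if y = x then (1 : ℂ) else 0)
      = (PEquiv.single x x).toMatrix := by
  ext a b
  simp only [toMatrix_apply, mem_single_iff, Matrix.diagonal_apply]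
  split_ifs <;> simp_all [eq_comm]

lemma exists_mul {n i : ℕ} (hn : 0 < n) (hco : Nat.Coprime i n) (x t : ℕ)
    (hx : x < n) (ht : t < n) : ∃ m < n, (x + m * i) % n = t := by
  haveI : NeZero n := ⟨hn.ne'⟩
  set u : (ZMod n)ˣ := ZMod.unitOfCoprime i hco with hu
  set z : ZMod n := ((t : ZMod n) - (x : ZMod n)) * ↑u⁻¹ with hz
  refine ⟨z.val, ZMod.val_lt _, ?_⟩
  have hcast : ((z.val : ℕ) : ZMod n) = z := by
    simp [ZMod.natCast_val, ZMod.cast_id]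
  have hui : ((u : ZMod n)) = (i : ZMod n) := ZMod.coe_unitOfCoprime i hco
  have key : ((x + z.val * i : ℕ) : ZMod n) = (t : ZMod n) := by
    push_cast
    rw [hcast, hz, ← hui]
    have : ((t : ZMod n) - (x : ZMod n)) * ↑u⁻¹ * ↑u
        = ((t : ZMod n) - (x : ZMod n)) * (↑u⁻¹ * ↑u) := by ring
    rw [this, Units.inv_mul, mul_one]
    ring
  rw [ZMod.natCast_eq_natCast_iff'] at key
  rwa [Nat.mod_eq_of_lt ht] at key

lemma separation {n i : ℕ} (hi : 0 < i) (hin : i < n) (hco : Nat.Coprime i n)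
    (x y : Fin n)
    (h : ∀ m < n, (((x : ℕ) + m * i) % n < i ↔ ((y : ℕ) + m * i) % n < i)) : x = y := by
  have hx := x.isLt; have hy := y.isLt
  -- choose m with (x + m*i) % n = 0
  obtain ⟨m, hmn, hm⟩ := exists_mul (by omega) hco x 0 hx (by omega)
  set r : ℕ := ((y : ℕ) + m * i) % n with hr
  have hrlt : r < i := by
    have := (h m hmn).mp (by omega)
    omega
  by_cases hr0 : r = 0
  · have hmod : ((x : ℕ) + m * i) % n = ((y : ℕ) + m * i) % n := by omega
    have hme : (x : ℕ) ≡ (y : ℕ) [MOD n] := Nat.ModEq.add_right_cancel' (m * i) hmod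
    exact Fin.ext (by rwa [Nat.ModEq, Nat.mod_eq_of_lt hx, Nat.mod_eq_of_lt hy] at hme)
  · -- pick m' with (x + m'*i) % n = i - r, derive contradiction
    exfalso
    obtain ⟨m', hm'n, hm'⟩ := exists_mul (by omega) hco x (i - r) hx (by omega)
    have h1 : ((x : ℕ) + m' * i) % n < i := by omega
    have h2 := (h m' hm'n).mp h1
    -- now compute (y + m'*i) % n = i
    -- we know (x + m*i) ≡ 0, (y + m*i) ≡ r, (x + m'*i) ≡ i - r mod n
    -- hence m'*i ≡ i - r - x and y ≡ r - m*i, so y + m'*i ≡ i ... work via dvd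
    have e1 : ((x : ℕ) + m * i) % n = 0 := hm
    have e2 : ((y : ℕ) + m * i) % n = r := hr.symm
    have e3 : ((x : ℕ) + m' * i) % n = i - r := hm'
    -- (y + m'*i) + (x + m*i) ≡ (x + m'*i) + (y + m*i) mod n
    have base : ((y : ℕ) + m' * i) + ((x : ℕ) + m * i) = ((x : ℕ) + m' * i) + ((y : ℕ) + m * i) := by ring
    have mod1 : (((y : ℕ) + m' * i) + ((x : ℕ) + m * i)) % n = ((y : ℕ) + m' * i) % n := by
      obtain ⟨c, hc⟩ := Nat.dvd_of_mod_eq_zero e1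
      rw [hc, Nat.add_mul_mod_self_left]
    have mod2 : ((((x : ℕ) + m' * i) + ((y : ℕ) + m * i))) % n = i := by
      rw [Nat.add_mod, e3, e2]
      have hir : (i - r) + r = i := by omega
      rw [hir, Nat.mod_eq_of_lt hin]
    have : ((y : ℕ) + m' * i) % n = i := by rw [← mod1, base, mod2]
    omega

lemma rotm_trans_single {n i : ℕ} (hin : i ≤ n) {m : ℕ} (a b : Fin n)
    (hab : ((a : ℕ) + m * i) % n = (b : ℕ)) :
    (rotm n i hin m).trans (PEquiv.single b b) = PEquiv.single a b := by
  ext c d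
  have hc := c.isLt; have ha := a.isLt
  simp only [← Option.mem_def, mem_trans, mem_rotm hin, mem_single_iff]
  constructor
  · rintro ⟨e, he, rfl, rfl⟩
    refine ⟨?_, rfl⟩
    have hmod : ((c : ℕ) + m * i) % n = ((a : ℕ) + m * i) % n := by omega
    have hme := Nat.ModEq.add_right_cancel' (m * i) hmod
    exact Fin.ext (by rwa [Nat.ModEq, Nat.mod_eq_of_lt hc, Nat.mod_eq_of_lt ha] at hme)
  · rintro ⟨h1, h2⟩
    have hca : (c : ℕ) = (a : ℕ) := by rw [h1]
    refine ⟨b, ?_, rfl, h2⟩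
    rw [show ((c : ℕ) + m * i) = ((a : ℕ) + m * i) from by rw [hca]]
    omega

end Stmt11Aux

open Stmt11Aux PEquiv

/-- For `0 < i < n`, the matrices `J_n^i` and `(J_nᵀ)^{n-i}` generate `M_n(ℂ)` as a unital
algebra if and only if `gcd(i, n - i) = 1`. -/
theorem stmt_11 (n i : ℕ) (hi : 0 < i) (hin : i < n) :
    Algebra.adjoin ℂ
        ({jordan n ^ i, (jordan n)ᵀ ^ (n - i)} : Set (Matrix (Fin n) (Fin n) ℂ)) = ⊤ ↔
      Nat.gcd i (n - i) = 1 := by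
  have hAA : jordan n ^ i = ((sh n i).toMatrix : Matrix (Fin n) (Fin n) ℂ) := jordan_pow n i
  have hBA : (jordan n)ᵀ ^ (n - i) = (((sh n (n - i)).symm).toMatrix : Matrix (Fin n) (Fin n) ℂ) := by
    rw [← Matrix.transpose_pow, jordan_pow, toMatrix_symm]
  constructor
  · -- if the gcd is not 1, the algebra is not everything
    intro htop
    by_contra hne
    set d := Nat.gcd i (n - i) with hd
    have hdpos : 0 < d := Nat.gcd_pos_of_pos_left _ hi
    have hd2 : 2 ≤ d := by omega
    have hdi : d ∣ i := Nat.gcd_dvd_left _ _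
    have hdk : d ∣ (n - i) := Nat.gcd_dvd_right _ _
    obtain ⟨ω, hprim⟩ : ∃ ω : ℂ, IsPrimitiveRoot ω d :=
      ⟨_, Complex.isPrimitiveRoot_exp d (by omega)⟩
    have hω1 : ω ≠ 1 := by
      intro h
      have h1 : d ∣ 1 := hprim.dvd_of_pow_eq_one 1 (by simpa using h)
      exact hne (Nat.dvd_one.mp h1)
    have hωi : ω ^ i = 1 := by
      obtain ⟨c, hc⟩ := hdi
      rw [hc, pow_mul, hprim.pow_eq_one, one_pow]
    have hωk : ω ^ (n - i) = 1 := by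
      obtain ⟨c, hc⟩ := hdk
      rw [hc, pow_mul, hprim.pow_eq_one, one_pow]
    set D : Matrix (Fin n) (Fin n) ℂ := Matrix.diagonal (fun x : Fin n => ω ^ (x : ℕ)) with hD
    have hDA : D * (jordan n ^ i) = (jordan n ^ i) * D := by
      rw [hAA]
      ext a b
      rw [Matrix.diagonal_mul, Matrix.mul_diagonal]
      simp only [toMatrix_apply, mem_sh]
      split_ifs with h
      · rw [mul_one, one_mul, ← h, pow_add, hωi, mul_one]
      · rw [mul_zero, zero_mul]
    have hDB : D * ((jordan n)ᵀ ^ (n - i)) = ((jordan n)ᵀ ^ (n - i)) * D := by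
      rw [hBA]
      ext a b
      rw [Matrix.diagonal_mul, Matrix.mul_diagonal]
      simp only [toMatrix_apply, mem_iff_mem, mem_sh]
      split_ifs with h
      · rw [mul_one, one_mul, ← h, pow_add, hωk, mul_one]
      · rw [mul_zero, zero_mul]
    have hcent : Algebra.adjoin ℂ
        ({jordan n ^ i, (jordan n)ᵀ ^ (n - i)} : Set (Matrix (Fin n) (Fin n) ℂ))
          ≤ Subalgebra.centralizer ℂ {D} := by
      rw [Algebra.adjoin_le_iff]
      rintro M hM
      rw [SetLike.mem_coe, Subalgebra.mem_centralizer_iff]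
      rintro g rfl
      rcases hM with rfl | rfl
      · exact hDA
      · exact hDB
    have hmem : Matrix.single (⟨0, by omega⟩ : Fin n) (⟨1, by omega⟩ : Fin n) (1 : ℂ)
        ∈ Subalgebra.centralizer ℂ {D} := by
      apply hcent
      rw [htop]
      trivial
    rw [Subalgebra.mem_centralizer_iff] at hmem
    have hcomm := hmem D rfl
    have h01 := congrFun (congrFun hcomm (⟨0, by omega⟩ : Fin n)) (⟨1, by omega⟩ : Fin n)
    rw [Matrix.diagonal_mul, Matrix.mul_diagonal] at h01
    simp only [Matrix.single, Matrix.of_apply, and_self, if_true, Fin.val_mk,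
      pow_zero, pow_one] at h01
    rw [one_mul, one_mul] at h01
    exact hω1 h01.symm
  · -- if the gcd is 1, the algebra is everything
    intro hco1
    have hco_in : Nat.Coprime i n := by
      have h1 : Nat.Coprime i (n - i) := hco1
      rwa [Nat.coprime_sub_self_right hin.le] at h1
    set S := Algebra.adjoin ℂ
        ({jordan n ^ i, (jordan n)ᵀ ^ (n - i)} : Set (Matrix (Fin n) (Fin n) ℂ)) with hS
    have hA : ((sh n i).toMatrix : Matrix (Fin n) (Fin n) ℂ) ∈ S := by
      rw [← hAA]; exact Algebra.subset_adjoin (Set.mem_insert _ _)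
    have hB : (((sh n (n - i)).symm).toMatrix : Matrix (Fin n) (Fin n) ℂ) ∈ S := by
      rw [← hBA]; exact Algebra.subset_adjoin (Set.mem_insert_of_mem _ rfl)
    have hC : ((rotm n i hin.le 1).toMatrix : Matrix (Fin n) (Fin n) ℂ) ∈ S := by
      rw [← C_eq hin]; exact add_mem hA hB
    have hCm : ∀ m, ((rotm n i hin.le m).toMatrix : Matrix (Fin n) (Fin n) ℂ) ∈ S := fun m => by
      rw [← pow_rotm hin.le m]; exact pow_mem hC m
    have hPm : ∀ m, ((pr n i m).toMatrix : Matrix (Fin n) (Fin n) ℂ) ∈ S := by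
      intro m
      induction m with
      | zero =>
        rw [← P0_eq hi hin, toMatrix_trans]
        exact mul_mem (hCm _) hB
      | succ m ih =>
        rw [← pr_succ hi hin m, toMatrix_trans, toMatrix_trans]
        exact mul_mem hC (mul_mem ih (hCm _))
    have hE : ∀ x : Fin n, ((PEquiv.single x x).toMatrix : Matrix (Fin n) (Fin n) ℂ) ∈ S := by
      intro x
      set g : ℕ → Fin n → ℂ := fun m y =>
        if ((((y : ℕ) + m * i) % n < i) ↔ (((x : ℕ) + m * i) % n < i)) then 1 else 0 with hg
      set F : ℕ → Matrix (Fin n) (Fin n) ℂ := fun m => Matrix.diagonal (g m) with hF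
      have hFm : ∀ m, F m ∈ S := by
        intro m
        rw [hF]; dsimp only
        by_cases h : ((x : ℕ) + m * i) % n < i
        · have : Matrix.diagonal (g m) = (pr n i m).toMatrix := by
            rw [pr_toMatrix, hg]
            congr 1
            funext y
            by_cases hy : ((y : ℕ) + m * i) % n < i <;> simp [hy, h]
          rw [this]; exact hPm m
        · have : Matrix.diagonal (g m) = 1 - (pr n i m).toMatrix := by
            ext a b
            rw [Matrix.sub_apply, pr_toMatrix, Matrix.diagonal_apply, Matrix.diagonal_apply,
              Matrix.one_apply]
            by_cases hab : a = b
            · subst hab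
              simp only [if_pos rfl]
              by_cases hy : ((a : ℕ) + m * i) % n < i <;> simp [hy, h, hg]
            · simp [hab]
          rw [this]; exact sub_mem (one_mem S) (hPm m)
      have hlist : (((List.range n).map F).prod : Matrix (Fin n) (Fin n) ℂ) ∈ S := by
        apply Subalgebra.list_prod_mem
        intro M hM
        simp only [List.mem_map] at hM
        obtain ⟨m, _, rfl⟩ := hM
        exact hFm m
      have hprod : (((List.range n).map F).prod : Matrix (Fin n) (Fin n) ℂ)
          = (PEquiv.single x x).toMatrix := by
        rw [hF, list_prod_diagonal, ← diag_single]
        refine congrArg Matrix.diagonal (funext fun y => ?_)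
        by_cases hxy : y = x
        · subst hxy
          rw [if_pos rfl]
          apply List.prod_eq_one
          intro z hz
          simp only [List.mem_map, List.mem_range] at hz
          obtain ⟨m, _, rfl⟩ := hz
          rw [hg]; simp
        · rw [if_neg hxy]
          have hex : ∃ m < n, ¬((((y : ℕ) + m * i) % n < i) ↔ (((x : ℕ) + m * i) % n < i)) := by
            by_contra hc
            push_neg at hc
            exact hxy (separation hi hin hco_in y x (fun m hm => hc m hm))
          obtain ⟨m, hmn, hmne⟩ := hex
          apply List.prod_eq_zero
          simp only [List.mem_map, List.mem_range]
          exact ⟨m, hmn, by rw [hg]; simp [if_neg hmne]⟩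
      rw [← hprod]
      exact hlist
    rw [eq_top_iff]
    rintro M -
    rw [Matrix.matrix_eq_sum_single M]
    apply Subalgebra.sum_mem
    intro a _
    apply Subalgebra.sum_mem
    intro b _
    have hunit : Matrix.single a b (1 : ℂ) ∈ S := by
      obtain ⟨m, hmn, hm⟩ := exists_mul (by omega) hco_in a b a.isLt b.isLt
      rw [← single_toMatrix, ← rotm_trans_single hin.le a b hm, toMatrix_trans]
      exact mul_mem (hCm m) (hE b)
    have hsm : Matrix.single a b (M a b) = (M a b) • Matrix.single a b (1 : ℂ) := by
      rw [Matrix.smul_single, smul_eq_mul, mul_one]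
    rw [hsm]
    exact Subalgebra.smul_mem S hunit _
end

section
/- Let n and i be positive integers with i < n, let d be a common divisor of n and i, and identify M_n(ℂ) with the algebra of (n/d) × (n/d) block matrices with d × d blocks (i.e., index Fin n by pairs in Fin(n/d) × Fin d lexicographically). Under this identification, J_n^i equals the Kronecker product J_{n/d}^{i/d} ⊗ I_d and (J_nᵀ)^{n−i} equals (J_{n/d}ᵀ)^{(n−i)/d} ⊗ I_d, where I_d is the d × d identity matrix. -/
open Matrix Kronecker

lemma jordan_pow_apply (n k : ℕ) (a b : Fin n) :
    (jordan n ^ k) a b = if (a : ℕ) + k = (b : ℕ) then 1 else 0 := by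
  induction k generalizing b with
  | zero =>
    simp [pow_zero, one_apply, Fin.ext_iff]
  | succ k ih =>
    rw [pow_succ, mul_apply]
    have hsum : ∀ c : Fin n, (jordan n ^ k) a c * jordan n c b =
        if (a : ℕ) + k = (c : ℕ) ∧ (c : ℕ) + 1 = (b : ℕ) then 1 else 0 := by
      intro c
      rw [ih]
      simp only [jordan, of_apply]
      split_ifs with h1 h2 h3 <;> simp_all
    simp only [hsum]
    by_cases h : (a : ℕ) + k < n
    · rw [Finset.sum_eq_single (⟨(a : ℕ) + k, h⟩ : Fin n)]
      · have hiff : (True ∧ (a : ℕ) + k + 1 = (b : ℕ)) ↔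
            (a : ℕ) + (k + 1) = (b : ℕ) := by
          constructor
          · rintro ⟨-, h1⟩; omega
          · intro h1; exact ⟨trivial, by omega⟩
        simp only [Fin.val_mk]
        exact if_congr hiff rfl rfl
      · intro c _ hc
        rw [if_neg]
        rintro ⟨h1, -⟩
        exact hc (Fin.ext h1.symm)
      · simp
    · have hb : ¬ ((a : ℕ) + (k + 1) = (b : ℕ)) := by
        have := b.isLt; omega
      rw [if_neg hb]
      apply Finset.sum_eq_zero
      intro c _
      rw [if_neg]
      rintro ⟨h1, -⟩
      have := c.isLt; omega

lemma aux_iff (d p p' q q' k : ℕ) (hd : 0 < d) (hq : q < d) (hq' : q' < d) :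
    p * d + q + k * d = p' * d + q' ↔ (p + k = p' ∧ q = q') := by
  constructor
  · intro h
    have h2 : (p + k) * d + q = p' * d + q' := by rw [Nat.add_mul]; omega
    have hqq : q = q' := by
      have e1 : (q + (p + k) * d) % d = q % d := Nat.add_mul_mod_self_right q (p + k) d
      have e2 : (q' + p' * d) % d = q' % d := Nat.add_mul_mod_self_right q' p' d
      have h3 : q + (p + k) * d = q' + p' * d := by omega
      rw [h3, e2, Nat.mod_eq_of_lt hq', Nat.mod_eq_of_lt hq] at e1
      omega
    refine ⟨?_, hqq⟩
    have : (p + k) * d = p' * d := by omega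
    exact Nat.eq_of_mul_eq_mul_right hd this
  · rintro ⟨h1, h2⟩
    subst h2
    have : (p + k) * d = p' * d := by rw [h1]
    rw [Nat.add_mul] at this; omega

/-- For `0 < i < n` and a common divisor `d` of `n` and `i`, under the lexicographic
identification of `Fin n` with `Fin (n/d) × Fin d`, the matrix `J_n^i` equals the
Kronecker product `J_{n/d}^{i/d} ⊗ I_d` and `(J_nᵀ)^{n-i}` equals
`(J_{n/d}ᵀ)^{(n-i)/d} ⊗ I_d`. -/
theorem stmt_13 (n i : ℕ) (hi : 0 < i) (hin : i < n) (d : ℕ)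
    (hdn : d ∣ n) (hdi : d ∣ i) :
    let e : Fin (n / d) × Fin d → Fin n := fun pq =>
      ⟨(pq.1 : ℕ) * d + (pq.2 : ℕ), by
        have h1 : (pq.1 : ℕ) < n / d := pq.1.isLt
        have h2 : (pq.2 : ℕ) < d := pq.2.isLt
        calc (pq.1 : ℕ) * d + (pq.2 : ℕ) < ((pq.1 : ℕ) + 1) * d := by
              rw [Nat.add_mul, Nat.one_mul]; omega
          _ ≤ (n / d) * d := Nat.mul_le_mul (Nat.succ_le_of_lt h1) (le_refl d)
          _ = n := Nat.div_mul_cancel hdn⟩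
    (jordan n ^ i).submatrix e e =
        (jordan (n / d) ^ (i / d)) ⊗ₖ (1 : Matrix (Fin d) (Fin d) ℂ) ∧
      ((jordan n)ᵀ ^ (n - i)).submatrix e e =
        ((jordan (n / d))ᵀ ^ ((n - i) / d)) ⊗ₖ (1 : Matrix (Fin d) (Fin d) ℂ) := by
  intro e
  have hd : 0 < d := by
    rcases Nat.eq_zero_or_pos d with h | h
    · subst h; simp at hdi; omega
    · exact h
  have hii : i / d * d = i := Nat.div_mul_cancel hdi
  have hdni : d ∣ n - i := Nat.dvd_sub hdn hdi
  have hnii : (n - i) / d * d = n - i := Nat.div_mul_cancel hdni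
  constructor
  · ext ⟨p, q⟩ ⟨p', q'⟩
    simp only [submatrix_apply, kroneckerMap_apply, jordan_pow_apply, one_apply, e]
    have := aux_iff d p p' q q' (i / d) hd q.isLt q'.isLt
    rw [hii] at this
    by_cases h : (p : ℕ) + i / d = (p' : ℕ) ∧ q = q'
    · obtain ⟨h1, h2⟩ := h
      rw [if_pos (this.mpr ⟨h1, by rw [h2]⟩), if_pos h1, if_pos h2, one_mul]
    · rw [if_neg, ]
      · rw [not_and_or] at h
        rcases h with h | h
        · rw [if_neg h, zero_mul]
        · rw [if_neg h, mul_zero]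
      · intro hc
        have := this.mp hc
        exact h ⟨this.1, Fin.ext this.2⟩
  · ext ⟨p, q⟩ ⟨p', q'⟩
    rw [← transpose_pow, ← transpose_pow]
    simp only [submatrix_apply, kroneckerMap_apply, transpose_apply, jordan_pow_apply,
      one_apply, e]
    have := aux_iff d p' p q' q ((n - i) / d) hd q'.isLt q.isLt
    rw [hnii] at this
    by_cases h : (p' : ℕ) + (n - i) / d = (p : ℕ) ∧ q = q'
    · obtain ⟨h1, h2⟩ := h
      rw [if_pos (this.mpr ⟨h1, by rw [h2]⟩), if_pos h1, if_pos h2, one_mul]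
    · rw [if_neg]
      · rw [not_and_or] at h
        rcases h with h | h
        · rw [if_neg h, zero_mul]
        · rw [if_neg h, mul_zero]
      · intro hc
        have := this.mp hc
        exact h ⟨this.1, (Fin.ext this.2).symm⟩
end

section
/- Let n and i be positive integers with i < n and gcd(i, n − i) = 1. If U is a ℂ-linear subspace of ℂ^n that is invariant under both J_n^i and (J_nᵀ)^{n−i} (i.e., J_n^i U ⊆ U and (J_nᵀ)^{n−i} U ⊆ U), then U = {0} or U = ℂ^n. -/
open Matrix

lemma jordan_mulVec {n : ℕ} (w : Fin n → ℂ) :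
    (jordan n).mulVec w = fun (a : Fin n) => if h : (a:ℕ)+1 < n then w ⟨(a:ℕ)+1, h⟩ else 0 := by
  funext a
  simp only [mulVec, dotProduct, jordan, Matrix.of_apply]
  by_cases h : (a:ℕ)+1 < n
  · rw [dif_pos h]
    rw [Finset.sum_eq_single (⟨(a:ℕ)+1, h⟩ : Fin n)]
    · simp
    · intro b _ hb
      rw [if_neg, zero_mul]
      intro hab; exact hb (Fin.ext hab.symm)
    · simp
  · rw [dif_neg h]
    apply Finset.sum_eq_zero
    intro b _
    rw [if_neg, zero_mul]
    intro hab; exact h (hab ▸ b.isLt)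

lemma jordanT_mulVec {n : ℕ} (w : Fin n → ℂ) :
    (jordan n)ᵀ.mulVec w = fun (a : Fin n) => if h : 1 ≤ (a:ℕ) then w ⟨(a:ℕ)-1, by omega⟩ else 0 := by
  funext a
  simp only [mulVec, dotProduct, jordan, Matrix.transpose_apply, Matrix.of_apply]
  by_cases h : 1 ≤ (a:ℕ)
  · rw [dif_pos h]
    rw [Finset.sum_eq_single (⟨(a:ℕ)-1, by omega⟩ : Fin n)]
    · rw [if_pos (by simp; omega), one_mul]
    · intro b _ hb
      rw [if_neg, zero_mul]
      intro hab; exact hb (Fin.ext (by simp; omega))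
    · simp
  · rw [dif_neg h]
    apply Finset.sum_eq_zero
    intro b _
    rw [if_neg, zero_mul]
    omega

lemma jordan_pow_mulVec {n : ℕ} (k : ℕ) (w : Fin n → ℂ) :
    (jordan n ^ k).mulVec w = fun (a : Fin n) => if h : (a:ℕ)+k < n then w ⟨(a:ℕ)+k, h⟩ else 0 := by
  induction k generalizing w with
  | zero => funext a; simp
  | succ k ih =>
    rw [pow_succ', ← mulVec_mulVec, jordan_mulVec, ih]
    funext a
    by_cases h : (a:ℕ)+1 < n
    · rw [dif_pos h]
      simp only [Fin.val_mk]
      by_cases h2 : (a:ℕ)+1+k < n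
      · rw [dif_pos h2, dif_pos (by omega : (a:ℕ)+(k+1) < n)]
        congr 1; exact Fin.ext (by simp; omega)
      · rw [dif_neg h2, dif_neg (by omega)]
    · rw [dif_neg h, dif_neg (by omega)]

lemma jordanT_pow_mulVec {n : ℕ} (k : ℕ) (w : Fin n → ℂ) :
    ((jordan n)ᵀ ^ k).mulVec w = fun (a : Fin n) => if h : k ≤ (a:ℕ) then w ⟨(a:ℕ)-k, by omega⟩ else 0 := by
  induction k generalizing w with
  | zero => funext a; simp
  | succ k ih =>
    rw [pow_succ', ← mulVec_mulVec, jordanT_mulVec, ih]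
    funext a
    by_cases h : 1 ≤ (a:ℕ)
    · rw [dif_pos h]
      simp only [Fin.val_mk]
      by_cases h2 : k ≤ (a:ℕ)-1
      · rw [dif_pos h2, dif_pos (by omega : k+1 ≤ (a:ℕ))]
        congr 1; exact Fin.ext (by simp; omega)
      · rw [dif_neg h2, dif_neg (by omega)]
    · rw [dif_neg h, dif_neg (by omega)]

/-- cyclic shift by `m` -/
def shf (n m : ℕ) (hn : 0 < n) (v : Fin n → ℂ) : Fin n → ℂ :=
  fun a => v ⟨((a:ℕ) + m) % n, Nat.mod_lt _ hn⟩

lemma shf_shf {n : ℕ} (m m' : ℕ) (hn : 0 < n) (v : Fin n → ℂ) :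
    shf n m' hn (shf n m hn v) = shf n (m' + m) hn v := by
  funext a
  simp only [shf]
  congr 1
  apply Fin.ext
  simp only [Fin.val_mk]
  rw [Nat.mod_add_mod]
  congr 1
  omega

lemma shf_zero {n : ℕ} (hn : 0 < n) (v : Fin n → ℂ) : shf n 0 hn v = v := by
  funext a
  simp only [shf]
  congr 1
  exact Fin.ext (by simp [Nat.mod_eq_of_lt a.isLt])

lemma exists_shift (n i : ℕ) (hn : 0 < n) (hco : Nat.gcd i n = 1) (b r : ℕ)
    (hr : r < n) : ∃ m, (b + m * i) % n = r := by
  haveI : NeZero n := ⟨hn.ne'⟩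
  set u : (ZMod n)ˣ := ZMod.unitOfCoprime i hco with hu
  set M := (((r : ZMod n) - (b : ZMod n)) * ((u⁻¹ : (ZMod n)ˣ) : ZMod n)).val with hM
  refine ⟨M, ?_⟩
  have hval : ∀ x : ZMod n, ((x.val : ℕ) : ZMod n) = x := ZMod.natCast_rightInverse
  have hui : ((u : (ZMod n)ˣ) : ZMod n) = (i : ZMod n) := ZMod.coe_unitOfCoprime i hco
  have huu : ((u⁻¹ : (ZMod n)ˣ) : ZMod n) * ((u : (ZMod n)ˣ) : ZMod n) = 1 := by
    rw [← Units.val_mul, inv_mul_cancel, Units.val_one]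
  have key : ((b + M * i : ℕ) : ZMod n) = (r : ZMod n) := by
    push_cast
    rw [hM, hval, ← hui]
    calc (b : ZMod n) + ((r : ZMod n) - b) * ↑u⁻¹ * ↑u
        = (b : ZMod n) + ((r : ZMod n) - b) * (↑u⁻¹ * ↑u) := by ring
      _ = r := by rw [huu]; ring
  calc (b + M * i) % n = ((b + M * i : ℕ) : ZMod n).val := (ZMod.val_natCast _ _).symm
    _ = ((r : ℕ) : ZMod n).val := by rw [key]
    _ = r := ZMod.val_cast_of_lt hr

section helpers

variable {n i : ℕ} {U : Submodule ℂ (Fin n → ℂ)}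

lemma mem_shift_i (hi : 0 < i) (hin : i < n) (hn : 0 < n)
    (hU1 : ∀ v ∈ U, (jordan n ^ i).mulVec v ∈ U)
    (hU2 : ∀ v ∈ U, ((jordan n)ᵀ ^ (n - i)).mulVec v ∈ U)
    (v : Fin n → ℂ) (hv : v ∈ U) : shf n i hn v ∈ U := by
  have h3 := U.add_mem (hU1 v hv) (hU2 v hv)
  have e : shf n i hn v = (jordan n ^ i).mulVec v + ((jordan n)ᵀ ^ (n-i)).mulVec v := by
    rw [jordan_pow_mulVec, jordanT_pow_mulVec]
    funext a
    simp only [shf, Pi.add_apply]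
    by_cases h : (a:ℕ) + i < n
    · rw [dif_pos h, dif_neg (by omega), add_zero]
      congr 1; exact Fin.ext (by simp [Nat.mod_eq_of_lt h])
    · rw [dif_neg h, dif_pos (by omega : n - i ≤ (a:ℕ)), zero_add]
      congr 1; apply Fin.ext; simp only [Fin.val_mk]
      rw [Nat.mod_eq_sub_mod (by omega), Nat.mod_eq_of_lt (by omega)]
      omega
  rw [e]; exact h3

lemma mem_shift_mul (hi : 0 < i) (hin : i < n) (hn : 0 < n)
    (hU1 : ∀ v ∈ U, (jordan n ^ i).mulVec v ∈ U)
    (hU2 : ∀ v ∈ U, ((jordan n)ᵀ ^ (n - i)).mulVec v ∈ U)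
    (k : ℕ) (v : Fin n → ℂ) (hv : v ∈ U) : shf n (k * i) hn v ∈ U := by
  induction k with
  | zero => rw [Nat.zero_mul, shf_zero]; exact hv
  | succ k ih =>
    have := mem_shift_i hi hin hn hU1 hU2 _ ih
    rw [shf_shf] at this
    have e : i + k * i = (k+1) * i := by ring
    rwa [e] at this

lemma mem_mask0 (hi : 0 < i) (hin : i < n) (hn : 0 < n)
    (hU1 : ∀ v ∈ U, (jordan n ^ i).mulVec v ∈ U)
    (hU2 : ∀ v ∈ U, ((jordan n)ᵀ ^ (n - i)).mulVec v ∈ U)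
    (v : Fin n → ℂ) (hv : v ∈ U) :
    (fun a : Fin n => if i ≤ (a:ℕ) then v a else 0) ∈ U := by
  have h2 := mem_shift_mul hi hin hn hU1 hU2 (n-1) _ (hU1 v hv)
  have e : shf n ((n-1) * i) hn ((jordan n ^ i).mulVec v)
      = fun a : Fin n => if i ≤ (a:ℕ) then v a else 0 := by
    rw [jordan_pow_mulVec]
    funext a
    simp only [shf, Fin.val_mk]
    by_cases h : i ≤ (a:ℕ)
    · have hidx : ((a:ℕ) + (n-1)*i) % n = (a:ℕ) - i := by
        have e2 : (a:ℕ) + (n-1)*i = ((a:ℕ) - i) + n * i := by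
          zify [h, (show 1 ≤ n by omega)]; ring
        rw [e2, Nat.add_mul_mod_self_left]
        exact Nat.mod_eq_of_lt (by omega)
      simp only [hidx]
      rw [dif_pos (show (a:ℕ) - i + i < n by omega), if_pos h]
      congr 1; exact Fin.ext (by simp; omega)
    · have hidx : ((a:ℕ) + (n-1)*i) % n = (a:ℕ) + n - i := by
        have e2 : (a:ℕ) + (n-1)*i = ((a:ℕ) + n - i) + (i-1) * n := by
          zify [hi, (show 1 ≤ n by omega), (show i ≤ (a:ℕ) + n by omega),
            (show 1 ≤ i by omega)]; ring
        rw [e2, Nat.add_mul_mod_self_right]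
        exact Nat.mod_eq_of_lt (by omega)
      simp only [hidx]
      rw [dif_neg (by omega), if_neg h]
  rw [e] at h2; exact h2

lemma mem_mask (hi : 0 < i) (hin : i < n) (hn : 0 < n)
    (hU1 : ∀ v ∈ U, (jordan n ^ i).mulVec v ∈ U)
    (hU2 : ∀ v ∈ U, ((jordan n)ᵀ ^ (n - i)).mulVec v ∈ U)
    (m : ℕ) (v : Fin n → ℂ) (hv : v ∈ U) :
    (fun a : Fin n => if i ≤ ((a:ℕ) + m * i) % n then v a else 0) ∈ U := by
  have hw := mem_shift_mul hi hin hn hU1 hU2 (m * (n-1)) v hv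
  have hw' := mem_mask0 hi hin hn hU1 hU2 _ hw
  have hf := mem_shift_mul hi hin hn hU1 hU2 m _ hw'
  have e : shf n (m * i) hn
      (fun a : Fin n => if i ≤ (a:ℕ) then shf n (m * (n-1) * i) hn v a else 0)
      = fun a : Fin n => if i ≤ ((a:ℕ) + m * i) % n then v a else 0 := by
    funext a
    simp only [shf, Fin.val_mk]
    congr 1
    congr 1
    apply Fin.ext
    simp only [Fin.val_mk]
    rw [Nat.mod_add_mod]
    have e2 : (a:ℕ) + m * i + m * (n-1) * i = (a:ℕ) + n * (m * i) := by
      zify [(show 1 ≤ n by omega)]; ring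
    rw [e2, Nat.add_mul_mod_self_left]
    exact Nat.mod_eq_of_lt a.isLt
  rw [e] at hf; exact hf

end helpers

/-- For `0 < i < n` with `gcd(i, n-i) = 1`, any subspace of `ℂⁿ` invariant under both
`J_n^i` and `(J_nᵀ)^{n-i}` is trivial. -/
theorem stmt_14 (n i : ℕ) (hi : 0 < i) (hin : i < n) (hgcd : Nat.gcd i (n - i) = 1)
    (U : Submodule ℂ (Fin n → ℂ))
    (hU1 : ∀ v ∈ U, (jordan n ^ i).mulVec v ∈ U)
    (hU2 : ∀ v ∈ U, ((jordan n)ᵀ ^ (n - i)).mulVec v ∈ U) :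
    U = ⊥ ∨ U = ⊤ := by
  classical
  have hn : 0 < n := hi.trans hin
  have hco : Nat.gcd i n = 1 := by
    rw [show n = (n - i) + i from by omega, Nat.gcd_add_self_right]
    exact hgcd
  by_cases hbot : U = ⊥
  · exact Or.inl hbot
  right
  obtain ⟨v, hv, hv0⟩ := Submodule.ne_bot_iff U |>.mp hbot
  obtain ⟨b, hb⟩ : ∃ b, v b ≠ 0 := by
    by_contra hc
    push_neg at hc
    exact hv0 (funext hc)
  -- masked complement membership
  have mem_cmask : ∀ (m : ℕ) (w : Fin n → ℂ), w ∈ U →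
      (fun a : Fin n => if i ≤ ((a:ℕ) + m * i) % n then 0 else w a) ∈ U := by
    intro m w hw
    have h1 := mem_mask hi hin hn hU1 hU2 m w hw
    have h2 := U.sub_mem hw h1
    have e : w - (fun a : Fin n => if i ≤ ((a:ℕ) + m * i) % n then w a else 0)
        = fun a : Fin n => if i ≤ ((a:ℕ) + m * i) % n then 0 else w a := by
      funext a
      simp only [Pi.sub_apply]
      split_ifs <;> ring
    rw [e] at h2; exact h2
  -- isolate coordinate b
  have isolate : ∀ (s : Finset (Fin n)) (w : Fin n → ℂ), w ∈ U →
      (∀ a, a ≠ b → a ∉ s → w a = 0) → Pi.single b (w b) ∈ U := by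
    intro s
    induction s using Finset.induction_on with
    | empty =>
      intro w hw hsupp
      have e : w = Pi.single b (w b) := by
        funext a
        by_cases hab : a = b
        · subst hab; simp
        · rw [Pi.single_eq_of_ne hab, hsupp a hab (Finset.notMem_empty a)]
      exact e ▸ hw
    | @insert c s hc ih =>
      intro w hw hsupp
      by_cases hcb : c = b
      · exact ih w hw (fun a hab has => hsupp a hab (by simp [has, hcb, hab]))
      · -- choose a mask killing c and keeping b
        set d := (((c:ℕ) + n - (b:ℕ)) % n) with hd
        have hbn := b.isLt
        have hcn := c.isLt
        have hdlt : d < n := Nat.mod_lt _ hn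
        have hdpos : 0 < d := by
          rcases Nat.eq_zero_or_pos d with h0 | h
          · exfalso
            rw [hd] at h0
            rcases lt_or_ge ((c:ℕ) + n - (b:ℕ)) n with hlt | hge
            · rw [Nat.mod_eq_of_lt hlt] at h0; omega
            · rw [Nat.mod_eq_sub_mod hge, Nat.mod_eq_of_lt (by omega)] at h0
              exact hcb (Fin.ext (by omega))
          · exact h
        set r := i - d with hrdef
        obtain ⟨m, hm⟩ := exists_shift n i hn hco (b:ℕ) r (by omega)
        have hcm : ((c:ℕ) + m * i) % n = r + d := by
          have h1 : ((b:ℕ) + d) % n = (c:ℕ) % n := by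
            rw [hd, Nat.add_mod_mod, show (b:ℕ) + ((c:ℕ) + n - (b:ℕ)) = (c:ℕ) + n from by omega,
              Nat.add_mod_right]
          calc ((c:ℕ) + m * i) % n = ((c:ℕ) % n + m * i) % n := (Nat.mod_add_mod _ _ _).symm
            _ = (((b:ℕ) + d) % n + m * i) % n := by rw [h1]
            _ = (((b:ℕ) + d) + m * i) % n := Nat.mod_add_mod _ _ _
            _ = (((b:ℕ) + m * i) + d) % n := by congr 1; omega
            _ = (((b:ℕ) + m * i) % n + d) % n := (Nat.mod_add_mod _ _ _).symm
            _ = (r + d) % n := by rw [hm]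
            _ = r + d := Nat.mod_eq_of_lt (by omega)
        have hw'mem := mem_cmask m w hw
        set w' : Fin n → ℂ := fun a : Fin n => if i ≤ ((a:ℕ) + m * i) % n then 0 else w a
          with hw'def
        have hw'b : w' b = w b := by
          simp only [hw'def]
          rw [hm, if_neg (by omega)]
        have hw'c : w' c = 0 := by
          simp only [hw'def]
          rw [hcm, if_pos (by omega)]
        have hres := ih w' hw'mem ?_
        · rwa [hw'b] at hres
        · intro a hab has
          by_cases hac : a = c
          · subst hac; exact hw'c
          · have h0 := hsupp a hab (by simp [hac, has])
            simp only [hw'def, h0]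
            split_ifs <;> rfl
  have hsingle : Pi.single b (v b) ∈ U :=
    isolate Finset.univ v hv (fun a _ ha => absurd (Finset.mem_univ a) ha)
  have hone : (Pi.single b (1:ℂ) : Fin n → ℂ) ∈ U := by
    have hsm := U.smul_mem (v b)⁻¹ hsingle
    have e : (v b)⁻¹ • (Pi.single b (v b) : Fin n → ℂ) = (Pi.single b (1:ℂ) : Fin n → ℂ) := by
      funext a
      simp only [Pi.smul_apply, Pi.single_apply, smul_eq_mul]
      split_ifs
      · exact inv_mul_cancel₀ hb
      · exact mul_zero _
    rwa [e] at hsm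
  have hall : ∀ c : Fin n, (Pi.single c (1:ℂ) : Fin n → ℂ) ∈ U := by
    intro c
    obtain ⟨m, hm⟩ := exists_shift n i hn hco (c:ℕ) (b:ℕ) b.isLt
    have hs := mem_shift_mul hi hin hn hU1 hU2 m _ hone
    have e : shf n (m * i) hn ((Pi.single b (1:ℂ) : Fin n → ℂ)) = Pi.single c 1 := by
      funext a
      simp only [shf, Pi.single_apply]
      by_cases hac : a = c
      · subst hac
        rw [if_pos (Fin.ext hm), if_pos rfl]
      · rw [if_neg, if_neg hac]
        intro hE
        have heq : ((a:ℕ) + m * i) % n = ((c:ℕ) + m * i) % n := by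
          rw [hm]
          exact congrArg Fin.val hE
        have hmod : (a:ℕ) % n = (c:ℕ) % n := Nat.ModEq.add_right_cancel' (m * i) heq
        rw [Nat.mod_eq_of_lt a.isLt, Nat.mod_eq_of_lt c.isLt] at hmod
        exact hac (Fin.ext hmod)
    rw [e] at hs; exact hs
  rw [Submodule.eq_top_iff']
  intro x
  have e : x = ∑ c : Fin n, x c • (Pi.single c (1:ℂ) : Fin n → ℂ) := by
    funext a
    rw [Finset.sum_apply]
    simp only [Pi.smul_apply, Pi.single_apply, smul_eq_mul, mul_ite, mul_one, mul_zero]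
    rw [Finset.sum_ite_eq]
    simp
  rw [e]
  exact Submodule.sum_mem U fun c _ => U.smul_mem _ (hall c)
end
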